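/- Let X be a finite metric space with n ≥ 2 points such that d(x,x') > ln(n−1) for every pair of distinct points x ≠ x'. Then the exponentiated distance matrix Z of X, with entries Z_{xx'} = exp(−d(x,x')), is positive definite and hence invertible; consequently X has a well-defined magnitude. -/

import Mathlib

/-- If `X` is a finite metric space with `n ≥ 2` points in which every pair of distinct
points is at distance greater than `ln (n - 1)`, then the exponentiated distance matrix
`Z x x' = exp (−d(x,x'))` is positive definite (hence invertible), and consequently `X`
has a weighting, so its magnitude is well-defined. -/
theorem sufficiently_separated_has_magnitude
    {X : Type*} [Fintype X] [DecidableEq X] [MetricSpace X]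
    (hn : 2 ≤ Fintype.card X)
    (hsep : ∀ x x' : X, x ≠ x' → Real.log ((Fintype.card X : ℝ) - 1) < dist x x') :
    (∀ v : X → ℝ, v ≠ 0 →
      0 < dotProduct v ((Matrix.of fun x x' : X => Real.exp (-dist x x')).mulVec v)) ∧
    IsUnit (Matrix.of fun x x' : X => Real.exp (-dist x x')).det ∧
    ∃ w : X → ℝ, ∀ x : X, ∑ x' : X, Real.exp (-dist x x') * w x' = 1 := by
  set Z : Matrix X X ℝ := Matrix.of fun x x' : X => Real.exp (-dist x x') with hZ
  have hn1 : (1:ℝ) ≤ (Fintype.card X : ℝ) - 1 := by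
    have : (2:ℝ) ≤ (Fintype.card X : ℝ) := by exact_mod_cast hn
    linarith
  set c : ℝ := ((Fintype.card X : ℝ) - 1)⁻¹ with hcdef
  have hcpos : 0 < c := by positivity
  have hcmul : c * ((Fintype.card X : ℝ) - 1) = 1 := by
    rw [hcdef, inv_mul_cancel₀ (by linarith)]
  have key : ∀ x x' : X, x ≠ x' → Real.exp (-dist x x') < c := by
    intro x x' h
    have h1 := hsep x x' h
    calc Real.exp (-dist x x') < Real.exp (-(Real.log ((Fintype.card X : ℝ) - 1))) :=
          Real.exp_lt_exp.2 (by linarith)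
      _ = c := by rw [Real.exp_neg, Real.exp_log (by linarith)]
  -- main positivity statement
  have main : ∀ v : X → ℝ, v ≠ 0 → 0 < dotProduct v (Z.mulVec v) := by
    intro v hv
    obtain ⟨x₀, hx₀⟩ := Function.ne_iff.mp hv
    replace hx₀ : v x₀ ≠ 0 := hx₀
    obtain ⟨x₁, hx₁⟩ := Fintype.exists_ne_of_one_lt_card (by omega) x₀
    set S : ℝ := ∑ x : X, (v x) ^ 2 with hSdef
    set F : X → X → ℝ := fun x x' =>
      Real.exp (-dist x x') * (v x * v x') + ((v x) ^ 2 + (v x') ^ 2) * (c / 2) with hFdef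
    have Fnonneg : ∀ x x' : X, x ≠ x' → 0 ≤ F x x' := by
      intro x x' h
      have hk := key x x' h
      have he := Real.exp_pos (-dist x x')
      simp only [hFdef]
      nlinarith [mul_nonneg he.le (sq_nonneg (v x + v x')),
        mul_nonneg (sub_pos.mpr hk).le (add_nonneg (sq_nonneg (v x)) (sq_nonneg (v x')))]
    have Fpos : 0 < F x₁ x₀ := by
      have hk := key x₁ x₀ hx₁
      have he := Real.exp_pos (-dist x₁ x₀)
      have h0 : 0 < (v x₀) ^ 2 := pow_pos (abs_pos.mpr hx₀) 2 |>.trans_le (by rw [sq_abs])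
      simp only [hFdef]
      nlinarith [mul_nonneg he.le (sq_nonneg (v x₁ + v x₀)),
        mul_pos (sub_pos.mpr hk)
          (add_pos_of_nonneg_of_pos (sq_nonneg (v x₁)) h0)]
    have identity : dotProduct v (Z.mulVec v)
        = ∑ x : X, ∑ x' ∈ Finset.univ.erase x, F x x' := by
      have hcard : ((Fintype.card X - 1 : ℕ) : ℝ) = (Fintype.card X : ℝ) - 1 := by
        push_cast [Nat.cast_sub (by omega : 1 ≤ Fintype.card X)]
        ring
      have lhs : dotProduct v (Z.mulVec v)
          = ∑ x : X, ((v x) ^ 2 +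
              ∑ x' ∈ Finset.univ.erase x, Real.exp (-dist x x') * (v x * v x')) := by
        have expand : dotProduct v (Z.mulVec v)
            = ∑ x : X, ∑ x' : X, v x * (Real.exp (-dist x x') * v x') := by
          simp [dotProduct, Matrix.mulVec, Finset.mul_sum, hZ]
        rw [expand]
        refine Finset.sum_congr rfl fun x _ => ?_
        rw [← Finset.add_sum_erase (Finset.univ)
          (fun x' => v x * (Real.exp (-dist x x') * v x')) (Finset.mem_univ x)]
        simp only [dist_self, neg_zero, Real.exp_zero, one_mul]
        refine congrArg₂ _ (by ring) (Finset.sum_congr rfl fun x' _ => by ring)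
      have inner : ∀ x : X,
          ∑ x' ∈ Finset.univ.erase x, ((v x) ^ 2 + (v x') ^ 2) * (c / 2)
            = (((Fintype.card X : ℝ) - 1) * (v x) ^ 2 + (S - (v x) ^ 2)) * (c / 2) := by
        intro x
        rw [← Finset.sum_mul]
        congr 1
        rw [Finset.sum_add_distrib, Finset.sum_const,
          Finset.card_erase_of_mem (Finset.mem_univ x), Finset.card_univ,
          Finset.sum_erase_eq_sub (Finset.mem_univ x), nsmul_eq_mul, hcard, ← hSdef]
      have sumsq : ∑ x : X, (((Fintype.card X : ℝ) - 1) * (v x) ^ 2 + (S - (v x) ^ 2)) * (c / 2)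
          = S := by
        rw [← Finset.sum_mul, Finset.sum_add_distrib, ← Finset.mul_sum, ← hSdef,
          Finset.sum_sub_distrib, Finset.sum_const, Finset.card_univ, nsmul_eq_mul, ← hSdef]
        calc (((Fintype.card X : ℝ) - 1) * S + ((Fintype.card X : ℝ) * S - S)) * (c / 2)
            = (c * ((Fintype.card X : ℝ) - 1)) * S := by ring
          _ = S := by rw [hcmul, one_mul]
      calc dotProduct v (Z.mulVec v)
          = ∑ x : X, ((v x) ^ 2 +
              ∑ x' ∈ Finset.univ.erase x, Real.exp (-dist x x') * (v x * v x')) := lhs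
        _ = S + ∑ x : X, ∑ x' ∈ Finset.univ.erase x, Real.exp (-dist x x') * (v x * v x') := by
            rw [Finset.sum_add_distrib, ← hSdef]
        _ = (∑ x : X, ∑ x' ∈ Finset.univ.erase x, ((v x) ^ 2 + (v x') ^ 2) * (c / 2))
            + ∑ x : X, ∑ x' ∈ Finset.univ.erase x, Real.exp (-dist x x') * (v x * v x') := by
            rw [Finset.sum_congr rfl fun x _ => inner x, sumsq]
        _ = ∑ x : X, ∑ x' ∈ Finset.univ.erase x, F x x' := by
            rw [← Finset.sum_add_distrib]
            refine Finset.sum_congr rfl fun x _ => ?_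
            rw [← Finset.sum_add_distrib]
            refine Finset.sum_congr rfl fun x' _ => by simp only [hFdef]; ring
    rw [identity]
    refine Finset.sum_pos' (fun x _ => Finset.sum_nonneg fun x' hx' =>
        Fnonneg x x' (Finset.ne_of_mem_erase hx').symm) ⟨x₁, Finset.mem_univ x₁, ?_⟩
    refine Finset.sum_pos' (fun x' hx' => Fnonneg x₁ x' (Finset.ne_of_mem_erase hx').symm)
      ⟨x₀, Finset.mem_erase.mpr ⟨Ne.symm hx₁, Finset.mem_univ x₀⟩, Fpos⟩
  have hherm : Z.IsHermitian := by
    ext x x'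
    simp [hZ, Matrix.conjTranspose_apply, dist_comm]
  have hpd : Z.PosDef := by
    refine Matrix.PosDef.of_dotProduct_mulVec_pos hherm fun v hv => ?_
    simpa using main v hv
  have hdet : IsUnit Z.det := isUnit_iff_ne_zero.mpr hpd.det_pos.ne'
  refine ⟨main, hdet, ⟨Z⁻¹.mulVec 1, fun x => ?_⟩⟩
  have : Z.mulVec (Z⁻¹.mulVec 1) = 1 := by
    rw [Matrix.mulVec_mulVec, Matrix.mul_nonsing_inv Z hdet, Matrix.one_mulVec]
  have hx := congrFun this x
  simpa [Matrix.mulVec, dotProduct, hZ] using hx
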